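/- Let (X, d) be a Polish metric space whose distance is geodesically convex in the following sense: for all x, y, z, u ∈ X and t ∈ [0, 1], if d(x, y) = t·d(x, z) and d(y, z) = (1 − t)·d(x, z), then d(u, y) ≤ (1 − t)·d(u, x) + t·d(u, z). Let Q, P₀, P₁, P_t be Borel probability measures on X with finite first moments, let t ∈ [0, 1], and suppose there exists a probability measure π₃ on X × X × X whose three marginals are P₀, P_t, P₁ respectively and such that, π₃-almost surely in (x, y, z), d(x, y) = t·d(x, z) and d(y, z) = (1 − t)·d(x, z). Suppose moreover that there exist couplings of Q with P₀ and of Q with P₁ attaining W₁(Q, P₀) and W₁(Q, P₁). Then W₁(Q, P_t) ≤ (1 − t)·W₁(Q, P₀) + t·W₁(Q, P₁) + 4·t·(1 − t)·inf_{u₀ ∈ X} E_{u∼Q}[ d(u, u₀) ]. -/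

import Mathlib

open MeasureTheory TopologicalSpace
open scoped ProbabilityTheory ENNReal

/-- `π` is a coupling of `Q` and `P` : its marginals are `Q` and `P`. -/
def IsCoupling {X : Type*} [MeasurableSpace X] (π : Measure (X × X))
    (Q P : Measure X) : Prop :=
  π.map Prod.fst = Q ∧ π.map Prod.snd = P

/-- The 1-Wasserstein distance: infimum of `∫ d(x,y) dπ` over couplings `π` of `Q, P`. -/
noncomputable def W1 {X : Type*} [MetricSpace X] [MeasurableSpace X]
    (Q P : Measure X) : ℝ :=
  sInf {r | ∃ π : Measure (X × X), IsCoupling π Q P ∧ r = ∫ p, dist p.1 p.2 ∂π}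

section Aux

open ProbabilityTheory

variable {A B C : Type*} [MeasurableSpace A] [MeasurableSpace B] [MeasurableSpace C]

/-- The second marginal of `μ ⊗ₘ (κ.comap g)` agrees with that of `(μ.map g) ⊗ₘ κ`. -/
lemma map_snd_compProd_comap (μ : Measure A) [SFinite μ] (κ : Kernel B C)
    [IsSFiniteKernel κ] {g : A → B} (hg : Measurable g) :
    (μ ⊗ₘ κ.comap g hg).map Prod.snd = ((μ.map g) ⊗ₘ κ).map Prod.snd := by
  ext s hs
  rw [Measure.map_apply measurable_snd hs, Measure.map_apply measurable_snd hs,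
    Measure.compProd_apply (measurable_snd hs), Measure.compProd_apply (measurable_snd hs)]
  have hpre : ∀ a : A, (Prod.mk a ⁻¹' (Prod.snd ⁻¹' s) : Set C) = s := by
    intro a; ext c; simp
  have hpre' : ∀ b : B, (Prod.mk b ⁻¹' (Prod.snd ⁻¹' s) : Set C) = s := by
    intro b; ext c; simp
  simp_rw [hpre, hpre', Kernel.comap_apply]
  exact (lintegral_map (κ.measurable_coe hs) hg).symm

end Aux

section AuxMetric

open ProbabilityTheory

variable {X : Type*} [MetricSpace X] [MeasurableSpace X] [BorelSpace X]

/-- Change of variables for an iterated `edist` integral against a comapped kernel. -/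
lemma lintegral_edist_comap [SecondCountableTopology X] {A : Type*} [MeasurableSpace A]
    (μ : Measure A) [SFinite μ] (κ : Kernel X X) [IsSFiniteKernel κ]
    {g : A → X} (hg : Measurable g) :
    (∫⁻ a, ∫⁻ u, edist u (g a) ∂(κ (g a)) ∂μ)
      = ∫⁻ p : X × X, edist p.2 p.1 ∂((μ.map g) ⊗ₘ κ) := by
  rw [Measure.lintegral_compProd (measurable_snd.edist measurable_fst)]
  exact (lintegral_map
    ((measurable_snd.edist measurable_fst).lintegral_kernel_prod_right' (κ := κ)) hg).symm

/-- Change of variables, constant second argument version. -/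
lemma lintegral_edist_const_comap [SecondCountableTopology X] {A : Type*} [MeasurableSpace A]
    (μ : Measure A) [SFinite μ] (κ : Kernel X X) [IsSFiniteKernel κ]
    {g : A → X} (hg : Measurable g) (u₀ : X) :
    (∫⁻ a, ∫⁻ u, edist u u₀ ∂(κ (g a)) ∂μ)
      = ∫⁻ p : X × X, edist p.2 u₀ ∂((μ.map g) ⊗ₘ κ) := by
  rw [Measure.lintegral_compProd (measurable_snd.edist measurable_const)]
  exact (lintegral_map
    ((measurable_snd.edist measurable_const).lintegral_kernel_prod_right' (κ := κ)) hg).symm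

/-- Finite first moment at one point implies it at every point. -/
lemma integrable_dist_pt (μ : Measure X) [IsFiniteMeasure μ]
    (h : ∃ x₀, Integrable (fun x => dist x x₀) μ) (u₀ : X) :
    Integrable (fun x => dist x u₀) μ := by
  obtain ⟨x₀, hx⟩ := h
  refine (hx.add (integrable_const (dist x₀ u₀))).mono'
    ((continuous_id.dist continuous_const).aestronglyMeasurable)
    (ae_of_all _ fun x => ?_)
  rw [Real.norm_eq_abs, abs_of_nonneg dist_nonneg]
  exact dist_triangle x x₀ u₀

/-- The distance is integrable under a coupling of two measures with finite first moments. -/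
lemma integrable_dist_coupling [SecondCountableTopology X] (π : Measure (X × X))
    [IsFiniteMeasure π]
    {Q P : Measure X} (hf : π.map Prod.fst = Q) (hs : π.map Prod.snd = P)
    (hQ : ∃ x₀, Integrable (fun x => dist x x₀) Q)
    (hP : ∃ x₀, Integrable (fun x => dist x x₀) P) :
    Integrable (fun p : X × X => dist p.1 p.2) π := by
  obtain ⟨a, ha⟩ := hQ
  obtain ⟨b, hb⟩ := hP
  have h1 : Integrable (fun p : X × X => dist p.1 a) π := by
    have hiff := integrable_map_measure (μ := π) (f := Prod.fst)
      (g := fun x => dist x a)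
      (by rw [hf]; exact (continuous_id.dist continuous_const).aestronglyMeasurable)
      measurable_fst.aemeasurable
    rw [hf] at hiff
    exact hiff.mp ha
  have h2 : Integrable (fun p : X × X => dist p.2 b) π := by
    have hiff := integrable_map_measure (μ := π) (f := Prod.snd)
      (g := fun x => dist x b)
      (by rw [hs]; exact (continuous_id.dist continuous_const).aestronglyMeasurable)
      measurable_snd.aemeasurable
    rw [hs] at hiff
    exact hiff.mp hb
  refine ((h1.add (integrable_const (dist a b))).add h2).mono'
    ((continuous_fst.dist continuous_snd).aestronglyMeasurable)
    (ae_of_all _ fun p => ?_)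
  rw [Real.norm_eq_abs, abs_of_nonneg dist_nonneg]
  calc dist p.1 p.2 ≤ dist p.1 b + dist b p.2 := dist_triangle _ _ _
    _ ≤ (dist p.1 a + dist a b) + dist p.2 b := by
        rw [dist_comm b p.2]; gcongr; exact dist_triangle _ _ _

/-- Lower integral of `edist` equals `ofReal` of the Bochner integral of `dist`. -/
lemma lintegral_edist_eq_ofReal (π : Measure (X × X))
    (hint : Integrable (fun p : X × X => dist p.1 p.2) π) :
    (∫⁻ p, edist p.1 p.2 ∂π) = ENNReal.ofReal (∫ p, dist p.1 p.2 ∂π) := by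
  rw [ofReal_integral_eq_lintegral_ofReal hint (ae_of_all _ fun p => dist_nonneg)]
  simp_rw [edist_dist]

lemma lintegral_edist_pt_eq_ofReal (μ : Measure X) [IsFiniteMeasure μ]
    (h : ∃ x₀, Integrable (fun x => dist x x₀) μ) (u₀ : X) :
    (∫⁻ x, edist x u₀ ∂μ) = ENNReal.ofReal (∫ x, dist x u₀ ∂μ) := by
  rw [ofReal_integral_eq_lintegral_ofReal (integrable_dist_pt μ h u₀)
    (ae_of_all _ fun x => dist_nonneg)]
  simp_rw [edist_dist]

end AuxMetric

/-- **Almost-convexity of the 1-Wasserstein distance along displacement geodesics.**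
Let `(X, d)` be a Polish metric space with geodesically convex distance. Let
`Q, P₀, P₁, P_t` have finite first moments, let `t ∈ [0,1]`, and let `π₃` witness that
`P_t` lies at position `t` on a displacement geodesic from `P₀` to `P₁`. If optimal
couplings attaining `W₁(Q,P₀)` and `W₁(Q,P₁)` exist, then
`W₁(Q,P_t) ≤ (1−t) W₁(Q,P₀) + t W₁(Q,P₁) + 4 t (1−t) inf_{u₀} E_{u∼Q}[d(u,u₀)]`. -/
theorem w1_almost_convex_along_displacement
    {X : Type*} [MetricSpace X] [SeparableSpace X] [CompleteSpace X]
    [MeasurableSpace X] [BorelSpace X]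
    (hgeo : ∀ x y z u : X, ∀ s ∈ Set.Icc (0 : ℝ) 1,
      dist x y = s * dist x z → dist y z = (1 - s) * dist x z →
      dist u y ≤ (1 - s) * dist u x + s * dist u z)
    (Q P₀ P₁ Pt : Measure X)
    [IsProbabilityMeasure Q] [IsProbabilityMeasure P₀]
    [IsProbabilityMeasure P₁] [IsProbabilityMeasure Pt]
    (hQm : ∃ x₀, Integrable (fun x => dist x x₀) Q)
    (h₀m : ∃ x₀, Integrable (fun x => dist x x₀) P₀)
    (h₁m : ∃ x₀, Integrable (fun x => dist x x₀) P₁)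
    (htm : ∃ x₀, Integrable (fun x => dist x x₀) Pt)
    (t : ℝ) (ht : t ∈ Set.Icc (0 : ℝ) 1)
    (π₃ : Measure (X × X × X))
    (hm₁ : π₃.map (fun q => q.1) = P₀)
    (hm₂ : π₃.map (fun q => q.2.1) = Pt)
    (hm₃ : π₃.map (fun q => q.2.2) = P₁)
    (hdisp : ∀ᵐ q ∂π₃, dist q.1 q.2.1 = t * dist q.1 q.2.2 ∧
      dist q.2.1 q.2.2 = (1 - t) * dist q.1 q.2.2)
    (hopt₀ : ∃ π : Measure (X × X), IsCoupling π Q P₀ ∧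
      (∫ p, dist p.1 p.2 ∂π) = W1 Q P₀)
    (hopt₁ : ∃ π : Measure (X × X), IsCoupling π Q P₁ ∧
      (∫ p, dist p.1 p.2 ∂π) = W1 Q P₁) :
    W1 Q Pt ≤ (1 - t) * W1 Q P₀ + t * W1 Q P₁
      + 4 * t * (1 - t) * ⨅ u₀ : X, ∫ u, dist u u₀ ∂Q := by
  classical
  haveI : SecondCountableTopology X := UniformSpace.secondCountable_of_separable X
  obtain ⟨t0, t1⟩ := ht
  obtain ⟨π₀, ⟨h₀f, h₀s⟩, h₀val⟩ := hopt₀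
  obtain ⟨π₁, ⟨h₁f, h₁s⟩, h₁val⟩ := hopt₁
  haveI : Nonempty X := ⟨hQm.choose⟩
  -- probability instances
  haveI hπ₀p : IsProbabilityMeasure π₀ := by
    constructor
    rw [← Set.preimage_univ (f := Prod.fst), ← Measure.map_apply measurable_fst .univ, h₀f]
    exact measure_univ
  haveI hπ₁p : IsProbabilityMeasure π₁ := by
    constructor
    rw [← Set.preimage_univ (f := Prod.fst), ← Measure.map_apply measurable_fst .univ, h₁f]
    exact measure_univ
  haveI hπ₃p : IsProbabilityMeasure π₃ := by
    constructor
    rw [← Set.preimage_univ (f := fun q : X × X × X => q.1),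
      ← Measure.map_apply measurable_fst .univ, hm₁]
    exact measure_univ
  -- swapped optimal couplings and their disintegrations
  set ρ₀ : Measure (X × X) := π₀.map Prod.swap with hρ₀
  set ρ₁ : Measure (X × X) := π₁.map Prod.swap with hρ₁
  haveI : IsProbabilityMeasure ρ₀ := Measure.isProbabilityMeasure_map measurable_swap.aemeasurable
  haveI : IsProbabilityMeasure ρ₁ := Measure.isProbabilityMeasure_map measurable_swap.aemeasurable
  have hfst₀ : ρ₀.fst = P₀ := by
    simp only [Measure.fst, hρ₀, Measure.map_map measurable_fst measurable_swap]
    exact h₀s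
  have hfst₁ : ρ₁.fst = P₁ := by
    simp only [Measure.fst, hρ₁, Measure.map_map measurable_fst measurable_swap]
    exact h₁s
  set κ₀ := ρ₀.condKernel with hκ₀
  set κ₁ := ρ₁.condKernel with hκ₁
  have hdis₀ : P₀ ⊗ₘ κ₀ = ρ₀ := by rw [← hfst₀]; exact ρ₀.disintegrate _
  have hdis₁ : P₁ ⊗ₘ κ₁ = ρ₁ := by rw [← hfst₁]; exact ρ₁.disintegrate _
  -- glued measures
  set η₀ := κ₀.comap (fun q : X × X × X => q.1) measurable_fst with hη₀
  set η₁ := κ₁.comap (fun q : X × X × X => q.2.2) (measurable_snd.snd) with hη₁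
  have hη₀app : ∀ q : X × X × X, η₀ q = κ₀ q.1 := fun _ => rfl
  have hη₁app : ∀ q : X × X × X, η₁ q = κ₁ q.2.2 := fun _ => rfl
  set α : Measure ((X × X × X) × X) := π₃ ⊗ₘ η₀ with hα
  set β : Measure ((X × X × X) × X) := π₃ ⊗ₘ η₁ with hβ
  have hαfst : α.map Prod.fst = π₃ := by
    have := Measure.fst_compProd π₃ η₀
    simpa [Measure.fst] using this
  have hβfst : β.map Prod.fst = π₃ := by
    have := Measure.fst_compProd π₃ η₁
    simpa [Measure.fst] using this
  have hαsnd : α.map Prod.snd = Q := by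
    rw [hα, map_snd_compProd_comap, hm₁, hdis₀, hρ₀,
      Measure.map_map measurable_snd measurable_swap]
    exact h₀f
  have hβsnd : β.map Prod.snd = Q := by
    rw [hβ, map_snd_compProd_comap, hm₃, hdis₁, hρ₁,
      Measure.map_map measurable_snd measurable_swap]
    exact h₁f
  -- pair map to (u, y)
  set h : (X × X × X) × X → X × X := fun p => (p.2, p.1.2.1) with hh
  have mh : Measurable h := measurable_snd.prodMk (measurable_fst.snd.fst)
  set α' : Measure (X × X) := α.map h with hα'
  set β' : Measure (X × X) := β.map h with hβ'
  have hα'fst : α'.map Prod.fst = Q := by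
    rw [hα', Measure.map_map measurable_fst mh]; exact hαsnd
  have hβ'fst : β'.map Prod.fst = Q := by
    rw [hβ', Measure.map_map measurable_fst mh]; exact hβsnd
  have hα'snd : α'.map Prod.snd = Pt := by
    rw [hα', Measure.map_map measurable_snd mh]
    show α.map ((fun q : X × X × X => q.2.1) ∘ Prod.fst) = Pt
    rw [← Measure.map_map (measurable_snd.fst) measurable_fst, hαfst, hm₂]
  have hβ'snd : β'.map Prod.snd = Pt := by
    rw [hβ', Measure.map_map measurable_snd mh]
    show β.map ((fun q : X × X × X => q.2.1) ∘ Prod.fst) = Pt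
    rw [← Measure.map_map (measurable_snd.fst) measurable_fst, hβfst, hm₂]
  -- the combined coupling
  set γ : Measure (X × X) := ENNReal.ofReal (1 - t) • α' + ENNReal.ofReal t • β' with hγ
  have hsum : ENNReal.ofReal (1 - t) + ENNReal.ofReal t = 1 := by
    rw [← ENNReal.ofReal_add (by linarith) t0]
    norm_num
  have hγfst : γ.map Prod.fst = Q := by
    rw [hγ, Measure.map_add _ _ measurable_fst, Measure.map_smul, Measure.map_smul,
      hα'fst, hβ'fst, ← add_smul, hsum, one_smul]
  have hγsnd : γ.map Prod.snd = Pt := by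
    rw [hγ, Measure.map_add _ _ measurable_snd, Measure.map_smul, Measure.map_smul,
      hα'snd, hβ'snd, ← add_smul, hsum, one_smul]
  -- W1 at most the cost of γ
  have hW : W1 Q Pt ≤ ∫ p, dist p.1 p.2 ∂γ := by
    apply csInf_le
    · exact ⟨0, fun r ⟨π, _, hr⟩ => by
        rw [hr]; exact integral_nonneg fun p => dist_nonneg⟩
    · exact ⟨γ, ⟨hγfst, hγsnd⟩, rfl⟩
  refine le_trans hW ?_
  -- pass to lower integrals
  have hc : (∫ p, dist p.1 p.2 ∂γ) = (∫⁻ p, edist p.1 p.2 ∂γ).toReal := by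
    rw [integral_eq_lintegral_of_nonneg_ae (ae_of_all _ fun p => dist_nonneg)
      ((continuous_fst.dist continuous_snd).aestronglyMeasurable)]
    congr 1
    exact lintegral_congr fun p => (edist_dist _ _).symm
  rw [hc, ← h₀val, ← h₁val]
  set w₀ := ∫ p, dist p.1 p.2 ∂π₀ with hw₀
  set w₁ := ∫ p, dist p.1 p.2 ∂π₁ with hw₁
  have hw₀0 : 0 ≤ w₀ := integral_nonneg fun p => dist_nonneg
  have hw₁0 : 0 ≤ w₁ := integral_nonneg fun p => dist_nonneg
  have h4nn : (0:ℝ) ≤ 4 * t * (1 - t) := by nlinarith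
  rw [← sub_le_iff_le_add', Real.mul_iInf_of_nonneg h4nn]
  apply le_ciInf
  intro u₀
  rw [sub_le_iff_le_add']
  set R := ∫ u, dist u u₀ ∂Q with hR
  have hR0 : 0 ≤ R := integral_nonneg fun u => dist_nonneg
  apply ENNReal.toReal_le_of_le_ofReal (by nlinarith)
  -- everything in ℝ≥0∞ now
  set s : ℝ≥0∞ := ENNReal.ofReal t with hs
  set s' : ℝ≥0∞ := ENNReal.ofReal (1 - t) with hs'
  set W₀ : ℝ≥0∞ := ENNReal.ofReal w₀ with hW₀
  set W₁ : ℝ≥0∞ := ENNReal.ofReal w₁ with hW₁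
  set Re : ℝ≥0∞ := ENNReal.ofReal R with hRe
  have hofReal : ENNReal.ofReal ((1 - t) * w₀ + t * w₁ + 4 * t * (1 - t) * R)
      = s' * W₀ + s * W₁ + 4 * s * s' * Re := by
    rw [ENNReal.ofReal_add
        (add_nonneg (mul_nonneg (by linarith) hw₀0) (mul_nonneg t0 hw₁0))
        (mul_nonneg h4nn hR0),
      ENNReal.ofReal_add (mul_nonneg (by linarith) hw₀0) (mul_nonneg t0 hw₁0),
      ENNReal.ofReal_mul (by linarith : (0:ℝ) ≤ 1 - t), ENNReal.ofReal_mul t0,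
      ENNReal.ofReal_mul h4nn,
      ENNReal.ofReal_mul (by linarith : (0:ℝ) ≤ 4 * t),
      ENNReal.ofReal_mul (by norm_num : (0:ℝ) ≤ 4),
      ENNReal.ofReal_ofNat, ← hs, ← hs', ← hW₀, ← hW₁, ← hRe]
  rw [hofReal]
  -- measurability helpers
  have mE₁ : Measurable fun z : X => edist u₀ z := measurable_const.edist measurable_id
  have mE₂ : Measurable fun z : X => edist z u₀ := measurable_id.edist measurable_const
  -- integrability facts
  have hint₀ : Integrable (fun p : X × X => dist p.1 p.2) π₀ :=
    integrable_dist_coupling π₀ h₀f h₀s hQm h₀m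
  have hint₁ : Integrable (fun p : X × X => dist p.1 p.2) π₁ :=
    integrable_dist_coupling π₁ h₁f h₁s hQm h₁m
  have hW₀eq : (∫⁻ p, edist p.1 p.2 ∂π₀) = W₀ := lintegral_edist_eq_ofReal π₀ hint₀
  have hW₁eq : (∫⁻ p, edist p.1 p.2 ∂π₁) = W₁ := lintegral_edist_eq_ofReal π₁ hint₁
  have hReq : (∫⁻ u, edist u u₀ ∂Q) = Re := lintegral_edist_pt_eq_ofReal Q hQm u₀
  have hRπ₀ : (∫⁻ p : X × X, edist p.1 u₀ ∂π₀) = Re := by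
    rw [← hReq, ← h₀f, lintegral_map mE₂ measurable_fst]
  have hRπ₁ : (∫⁻ p : X × X, edist p.1 u₀ ∂π₁) = Re := by
    rw [← hReq, ← h₁f, lintegral_map mE₂ measurable_fst]
  -- the four change-of-variable identities
  have hT₁α : (∫⁻ q, ∫⁻ u, edist u q.1 ∂(η₀ q) ∂π₃) = W₀ := by
    simp only [hη₀app]
    rw [lintegral_edist_comap π₃ κ₀
      (measurable_fst : Measurable fun q : X × X × X => q.1), hm₁, hdis₀, hρ₀,
      lintegral_map (measurable_snd.edist measurable_fst) measurable_swap, ← hW₀eq]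
    rfl
  have hT₂β : (∫⁻ q, ∫⁻ u, edist u q.2.2 ∂(η₁ q) ∂π₃) = W₁ := by
    simp only [hη₁app]
    rw [lintegral_edist_comap π₃ κ₁
      ((measurable_snd.snd : Measurable fun q : X × X × X => q.2.2)), hm₃, hdis₁, hρ₁,
      lintegral_map (measurable_snd.edist measurable_fst) measurable_swap, ← hW₁eq]
    rfl
  have hRα : (∫⁻ q, ∫⁻ u, edist u u₀ ∂(η₀ q) ∂π₃) = Re := by
    simp only [hη₀app]
    rw [lintegral_edist_const_comap π₃ κ₀
      (measurable_fst : Measurable fun q : X × X × X => q.1) u₀, hm₁, hdis₀, hρ₀,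
      lintegral_map (measurable_snd.edist measurable_const) measurable_swap, ← hRπ₀]
    rfl
  have hRβ : (∫⁻ q, ∫⁻ u, edist u u₀ ∂(η₁ q) ∂π₃) = Re := by
    simp only [hη₁app]
    rw [lintegral_edist_const_comap π₃ κ₁
      ((measurable_snd.snd : Measurable fun q : X × X × X => q.2.2)) u₀, hm₃, hdis₁, hρ₁,
      lintegral_map (measurable_snd.edist measurable_const) measurable_swap, ← hRπ₁]
    rfl
  -- bounds through the optimal couplings
  have hP₁bound : (∫⁻ q, edist u₀ q.2.2 ∂π₃) ≤ Re + W₁ := by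
    have l1 : (∫⁻ q, edist u₀ q.2.2 ∂π₃) = ∫⁻ z, edist u₀ z ∂P₁ := by
      rw [← hm₃, lintegral_map mE₁ (measurable_snd.snd)]
    have l2 : (∫⁻ p : X × X, edist u₀ p.2 ∂π₁) = ∫⁻ z, edist u₀ z ∂P₁ := by
      rw [← h₁s, lintegral_map mE₁ measurable_snd]
    rw [l1, ← l2]
    calc (∫⁻ p : X × X, edist u₀ p.2 ∂π₁)
        ≤ ∫⁻ p : X × X, (edist p.1 u₀ + edist p.1 p.2) ∂π₁ := by
          refine lintegral_mono fun p => le_trans (edist_triangle u₀ p.1 p.2) ?_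
          rw [edist_comm u₀ p.1]
      _ = (∫⁻ p : X × X, edist p.1 u₀ ∂π₁) + ∫⁻ p : X × X, edist p.1 p.2 ∂π₁ :=
          lintegral_add_left (measurable_fst.edist measurable_const) _
      _ = Re + W₁ := by rw [hW₁eq, hRπ₁]
  have hP₀bound : (∫⁻ q, edist u₀ q.1 ∂π₃) ≤ Re + W₀ := by
    have l1 : (∫⁻ q, edist u₀ q.1 ∂π₃) = ∫⁻ x, edist u₀ x ∂P₀ := by
      rw [← hm₁, lintegral_map mE₁ measurable_fst]
    have l2 : (∫⁻ p : X × X, edist u₀ p.2 ∂π₀) = ∫⁻ x, edist u₀ x ∂P₀ := by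
      rw [← h₀s, lintegral_map mE₁ measurable_snd]
    rw [l1, ← l2]
    calc (∫⁻ p : X × X, edist u₀ p.2 ∂π₀)
        ≤ ∫⁻ p : X × X, (edist p.1 u₀ + edist p.1 p.2) ∂π₀ := by
          refine lintegral_mono fun p => le_trans (edist_triangle u₀ p.1 p.2) ?_
          rw [edist_comm u₀ p.1]
      _ = (∫⁻ p : X × X, edist p.1 u₀ ∂π₀) + ∫⁻ p : X × X, edist p.1 p.2 ∂π₀ :=
          lintegral_add_left (measurable_fst.edist measurable_const) _
      _ = Re + W₀ := by rw [hW₀eq, hRπ₀]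
  -- measurability of inner integrals
  have hG₀ : ∀ F : (X × X × X) × X → ℝ≥0∞, Measurable F →
      Measurable fun q => ∫⁻ u, F (q, u) ∂(η₀ q) := fun F hF =>
    hF.lintegral_kernel_prod_right' (κ := η₀)
  have hG₁ : ∀ F : (X × X × X) × X → ℝ≥0∞, Measurable F →
      Measurable fun q => ∫⁻ u, F (q, u) ∂(η₁ q) := fun F hF =>
    hF.lintegral_kernel_prod_right' (κ := η₁)
  -- pointwise geodesic bound, a.e.
  have hae : ∀ᵐ q ∂π₃, ∀ u : X,
      edist u q.2.1 ≤ s' * edist u q.1 + s * edist u q.2.2 := by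
    filter_upwards [hdisp] with q hq
    intro u
    have hg := hgeo q.1 q.2.1 q.2.2 u t ⟨t0, t1⟩ hq.1 hq.2
    calc edist u q.2.1 = ENNReal.ofReal (dist u q.2.1) := edist_dist _ _
      _ ≤ ENNReal.ofReal ((1 - t) * dist u q.1 + t * dist u q.2.2) :=
          ENNReal.ofReal_le_ofReal hg
      _ = s' * edist u q.1 + s * edist u q.2.2 := by
          rw [ENNReal.ofReal_add (mul_nonneg (by linarith) dist_nonneg)
            (mul_nonneg t0 dist_nonneg), ENNReal.ofReal_mul (by linarith),
            ENNReal.ofReal_mul t0, edist_dist, edist_dist]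
  -- the α branch
  have hLα : (∫⁻ p, edist p.1 p.2 ∂α') ≤ s' * W₀ + s * (Re + (Re + W₁)) := by
    have e1 : (∫⁻ p, edist p.1 p.2 ∂α')
        = ∫⁻ q, ∫⁻ u, edist u q.2.1 ∂(η₀ q) ∂π₃ := by
      rw [hα', lintegral_map (measurable_fst.edist measurable_snd) mh, hα,
        Measure.lintegral_compProd (measurable_snd.edist (measurable_fst.snd.fst))]
    rw [e1]
    have step1 : (∫⁻ q, ∫⁻ u, edist u q.2.1 ∂(η₀ q) ∂π₃)
        ≤ ∫⁻ q, (s' * ∫⁻ u, edist u q.1 ∂(η₀ q)) + (s * ∫⁻ u, edist u q.2.2 ∂(η₀ q)) ∂π₃ := by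
      apply lintegral_mono_ae
      filter_upwards [hae] with q hq
      calc (∫⁻ u, edist u q.2.1 ∂(η₀ q))
          ≤ ∫⁻ u, s' * edist u q.1 + s * edist u q.2.2 ∂(η₀ q) := lintegral_mono hq
        _ = (s' * ∫⁻ u, edist u q.1 ∂(η₀ q)) + (s * ∫⁻ u, edist u q.2.2 ∂(η₀ q)) := by
            have m1 : Measurable fun u : X => edist u q.1 :=
              measurable_id.edist measurable_const
            have m2 : Measurable fun u : X => edist u q.2.2 :=
              measurable_id.edist measurable_const
            rw [lintegral_add_left (m1.const_mul s'), lintegral_const_mul s' m1,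
              lintegral_const_mul s m2]
    refine step1.trans ?_
    have step2 : (∫⁻ q, (s' * ∫⁻ u, edist u q.1 ∂(η₀ q))
          + (s * ∫⁻ u, edist u q.2.2 ∂(η₀ q)) ∂π₃)
        = (s' * ∫⁻ q, ∫⁻ u, edist u q.1 ∂(η₀ q) ∂π₃)
          + (s * ∫⁻ q, ∫⁻ u, edist u q.2.2 ∂(η₀ q) ∂π₃) := by
      rw [lintegral_add_left ((hG₀ _ (measurable_snd.edist (measurable_fst.fst))).const_mul s'),
        lintegral_const_mul s' (hG₀ _ (measurable_snd.edist (measurable_fst.fst))),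
        lintegral_const_mul s (hG₀ _ (measurable_snd.edist (measurable_fst.snd.snd)))]
    rw [step2, hT₁α]
    have hT₂ : (∫⁻ q, ∫⁻ u, edist u q.2.2 ∂(η₀ q) ∂π₃) ≤ Re + (Re + W₁) := by
      have ub : (∫⁻ q, ∫⁻ u, edist u q.2.2 ∂(η₀ q) ∂π₃)
          ≤ ∫⁻ q, (∫⁻ u, edist u u₀ ∂(η₀ q)) + edist u₀ q.2.2 ∂π₃ := by
        apply lintegral_mono
        intro q
        calc (∫⁻ u, edist u q.2.2 ∂(η₀ q))
            ≤ ∫⁻ u, edist u u₀ + edist u₀ q.2.2 ∂(η₀ q) :=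
              lintegral_mono fun u => edist_triangle _ _ _
          _ = (∫⁻ u, edist u u₀ ∂(η₀ q)) + edist u₀ q.2.2 := by
              rw [lintegral_add_right _ measurable_const, lintegral_const, measure_univ,
                mul_one]
      refine ub.trans ?_
      rw [lintegral_add_left (hG₀ _ (measurable_snd.edist measurable_const))]
      rw [hRα]
      exact add_le_add (le_refl Re) hP₁bound
    gcongr
  -- the β branch
  have hLβ : (∫⁻ p, edist p.1 p.2 ∂β') ≤ s' * (Re + (Re + W₀)) + s * W₁ := by
    have e1 : (∫⁻ p, edist p.1 p.2 ∂β')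
        = ∫⁻ q, ∫⁻ u, edist u q.2.1 ∂(η₁ q) ∂π₃ := by
      rw [hβ', lintegral_map (measurable_fst.edist measurable_snd) mh, hβ,
        Measure.lintegral_compProd (measurable_snd.edist (measurable_fst.snd.fst))]
    rw [e1]
    have step1 : (∫⁻ q, ∫⁻ u, edist u q.2.1 ∂(η₁ q) ∂π₃)
        ≤ ∫⁻ q, (s' * ∫⁻ u, edist u q.1 ∂(η₁ q)) + (s * ∫⁻ u, edist u q.2.2 ∂(η₁ q)) ∂π₃ := by
      apply lintegral_mono_ae
      filter_upwards [hae] with q hq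
      calc (∫⁻ u, edist u q.2.1 ∂(η₁ q))
          ≤ ∫⁻ u, s' * edist u q.1 + s * edist u q.2.2 ∂(η₁ q) := lintegral_mono hq
        _ = (s' * ∫⁻ u, edist u q.1 ∂(η₁ q)) + (s * ∫⁻ u, edist u q.2.2 ∂(η₁ q)) := by
            have m1 : Measurable fun u : X => edist u q.1 :=
              measurable_id.edist measurable_const
            have m2 : Measurable fun u : X => edist u q.2.2 :=
              measurable_id.edist measurable_const
            rw [lintegral_add_left (m1.const_mul s'), lintegral_const_mul s' m1,
              lintegral_const_mul s m2]
    refine step1.trans ?_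
    have step2 : (∫⁻ q, (s' * ∫⁻ u, edist u q.1 ∂(η₁ q))
          + (s * ∫⁻ u, edist u q.2.2 ∂(η₁ q)) ∂π₃)
        = (s' * ∫⁻ q, ∫⁻ u, edist u q.1 ∂(η₁ q) ∂π₃)
          + (s * ∫⁻ q, ∫⁻ u, edist u q.2.2 ∂(η₁ q) ∂π₃) := by
      rw [lintegral_add_left ((hG₁ _ (measurable_snd.edist (measurable_fst.fst))).const_mul s'),
        lintegral_const_mul s' (hG₁ _ (measurable_snd.edist (measurable_fst.fst))),
        lintegral_const_mul s (hG₁ _ (measurable_snd.edist (measurable_fst.snd.snd)))]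
    rw [step2, hT₂β]
    have hT₁ : (∫⁻ q, ∫⁻ u, edist u q.1 ∂(η₁ q) ∂π₃) ≤ Re + (Re + W₀) := by
      have ub : (∫⁻ q, ∫⁻ u, edist u q.1 ∂(η₁ q) ∂π₃)
          ≤ ∫⁻ q, (∫⁻ u, edist u u₀ ∂(η₁ q)) + edist u₀ q.1 ∂π₃ := by
        apply lintegral_mono
        intro q
        calc (∫⁻ u, edist u q.1 ∂(η₁ q))
            ≤ ∫⁻ u, edist u u₀ + edist u₀ q.1 ∂(η₁ q) :=
              lintegral_mono fun u => edist_triangle _ _ _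
          _ = (∫⁻ u, edist u u₀ ∂(η₁ q)) + edist u₀ q.1 := by
              rw [lintegral_add_right _ measurable_const, lintegral_const, measure_univ,
                mul_one]
      refine ub.trans ?_
      rw [lintegral_add_left (hG₁ _ (measurable_snd.edist measurable_const))]
      rw [hRβ]
      exact add_le_add (le_refl Re) hP₀bound
    gcongr
  -- combine
  have hsum' : s' + s = 1 := hsum
  have hsplit : (∫⁻ p, edist p.1 p.2 ∂γ)
      = s' * (∫⁻ p, edist p.1 p.2 ∂α') + s * (∫⁻ p, edist p.1 p.2 ∂β') := by
    rw [hγ, lintegral_add_measure, lintegral_smul_measure, lintegral_smul_measure, smul_eq_mul,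
      smul_eq_mul]
  rw [hsplit]
  have hfinal : s' * (s' * W₀ + s * (Re + (Re + W₁))) + s * (s' * (Re + (Re + W₀)) + s * W₁)
      = s' * W₀ + s * W₁ + 4 * s * s' * Re := by
    have expand : s' * (s' * W₀ + s * (Re + (Re + W₁)))
          + s * (s' * (Re + (Re + W₀)) + s * W₁)
        = (s' + s) * s' * W₀ + (s' + s) * s * W₁ + (2 + 2) * (s * s') * Re := by
      ring
    rw [expand, hsum', one_mul, one_mul]
    have h22 : (2 + 2 : ℝ≥0∞) = 4 := by norm_num
    rw [h22]
    ring
  rw [← hfinal]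
  gcongr
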